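/- Assume k is infinite. The set G_2 = {(a,b) ∈ k^N × k^N : the pair (f̄_a, f̄_b) is an R-regular sequence} is nonempty if and only if the depth of R is at least 2, i.e., if and only if there exist homogeneous elements g_1, g_2 of positive degree in the irrelevant maximal ideal R_+ forming an R-regular sequence. -/

import Mathlib

set_option synthInstance.maxHeartbeats 1000000
set_option maxHeartbeats 2000000



open Pointwise

section aux
variable {R : Type*} [CommRing R]

lemma smul_top_eq_span' (x : R) : (x • ⊤ : Submodule R R) = Ideal.span {x} := by
  rw [← Submodule.ideal_span_singleton_smul, smul_eq_mul, Ideal.mul_top]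

lemma ideal_smul_top' (I : Ideal R) : (I • ⊤ : Submodule R R) = I := by
  rw [smul_eq_mul, Ideal.mul_top]

lemma mk_eq_zero_iff' (x u : R) :
    (Submodule.Quotient.mk u : QuotSMulTop x R) = 0 ↔ u ∈ Ideal.span {x} := by
  rw [Submodule.Quotient.mk_eq_zero, smul_top_eq_span']

lemma isSMulRegular_quotSMulTop_iff' (x y : R) :
    IsSMulRegular (QuotSMulTop x R) y ↔
      ∀ u : R, y * u ∈ Ideal.span {x} → u ∈ Ideal.span {x} := by
  constructor
  · intro h u hu
    have h0 : y • (Submodule.Quotient.mk u : QuotSMulTop x R) = y • (0 : QuotSMulTop x R) := by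
      rw [smul_zero, ← Submodule.Quotient.mk_smul, smul_eq_mul, mk_eq_zero_iff']
      exact hu
    rw [← mk_eq_zero_iff' x u]
    exact h h0
  · intro h m₁ m₂ hm
    obtain ⟨u, rfl⟩ := Submodule.Quotient.mk_surjective _ m₁
    obtain ⟨v, rfl⟩ := Submodule.Quotient.mk_surjective _ m₂
    simp only at hm
    rw [← Submodule.Quotient.mk_smul, ← Submodule.Quotient.mk_smul,
      Submodule.Quotient.eq, smul_top_eq_span', ← smul_sub, smul_eq_mul] at hm
    rw [Submodule.Quotient.eq, smul_top_eq_span']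
    exact h _ hm

lemma isRegular_pair_iff' (x y : R) :
    RingTheory.Sequence.IsRegular R [x, y] ↔
      IsSMulRegular R x ∧ (∀ u : R, y * u ∈ Ideal.span {x} → u ∈ Ideal.span {x}) ∧
        Ideal.span {x} ⊔ Ideal.span {y} ≠ ⊤ := by
  rw [RingTheory.Sequence.isRegular_iff, RingTheory.Sequence.isWeaklyRegular_cons_iff,
    RingTheory.Sequence.isWeaklyRegular_singleton_iff, isSMulRegular_quotSMulTop_iff']
  have h : Ideal.ofList [x, y] = Ideal.span {x} ⊔ Ideal.span {y} := by
    rw [Ideal.ofList_cons, Ideal.ofList_singleton]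
  rw [h, ideal_smul_top', and_assoc, ne_comm]

lemma isSMulRegular_iff_ne_zero' [IsDomain R] [Nontrivial R] (x : R) :
    IsSMulRegular R x ↔ x ≠ 0 := by
  constructor
  · rintro h rfl
    have : (0:R) • (1:R) = (0:R) • (0:R) := by simp
    have := h this
    simp at this
  · intro hx a b hab
    simp only [smul_eq_mul] at hab
    exact mul_left_cancel₀ hx hab

lemma exists_pow_red' (I : Ideal R) (g : R) :
    ∀ (m : ℕ) (z : R), z ∉ I → g ^ m * z ∈ I →
      ∃ j, g ^ j * z ∉ I ∧ g * (g ^ j * z) ∈ I := by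
  intro m
  induction m with
  | zero => intro z hz h; rw [pow_zero, one_mul] at h; exact absurd h hz
  | succ m ih =>
    intro z hz h
    by_cases hm : g ^ m * z ∈ I
    · exact ih z hz hm
    · refine ⟨m, hm, ?_⟩
      rw [← mul_assoc, ← pow_succ']
      exact h

lemma no_common_ann' [IsDomain R] (x g₁ g₂ z : R) (hx : x ≠ 0) (hg₁ : g₁ ≠ 0)
    (hmod : ∀ u, g₂ * u ∈ Ideal.span {g₁} → u ∈ Ideal.span {g₁})
    (hz : z ∉ Ideal.span {x}) (h1 : g₁ * z ∈ Ideal.span {x})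
    (h2 : g₂ * z ∈ Ideal.span {x}) : False := by
  obtain ⟨u, hu⟩ := Ideal.mem_span_singleton'.mp h1
  obtain ⟨v, hv⟩ := Ideal.mem_span_singleton'.mp h2
  have key : g₂ * u = g₁ * v := by
    have hxx : x * (g₂ * u) = x * (g₁ * v) := by
      calc x * (g₂ * u) = g₂ * (u * x) := by ring
      _ = g₂ * (g₁ * z) := by rw [hu]
      _ = g₁ * (g₂ * z) := by ring
      _ = g₁ * (v * x) := by rw [hv]
      _ = x * (g₁ * v) := by ring
    exact mul_left_cancel₀ hx hxx
  have hu' : u ∈ Ideal.span {g₁} := hmod u (key ▸ Ideal.mem_span_singleton'.mpr ⟨v, mul_comm v g₁⟩)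
  obtain ⟨t, ht⟩ := Ideal.mem_span_singleton'.mp hu'
  apply hz
  have : g₁ * z = g₁ * (t * x) := by rw [← hu, ← ht]; ring
  have hz' : z = t * x := mul_left_cancel₀ hg₁ this
  exact hz' ▸ Ideal.mem_span_singleton'.mpr ⟨t, rfl⟩

end aux


section avoid
variable {k : Type*} [Field k] [Infinite k] {R : Type*} [CommRing R] [IsDomain R]
  [IsNoetherianRing R] [Algebra k R] {V : Type*} [AddCommGroup V] [Module k V]

lemma exists_regular_elem' (L : V →ₗ[k] R) (x g₁ g₂ : R) (hx : x ≠ 0) (hg₁ : g₁ ≠ 0)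
    (hmod : ∀ u, g₂ * u ∈ Ideal.span {g₁} → u ∈ Ideal.span {g₁})
    (hgspan : ∀ J : Ideal R, J.IsPrime → (∀ v, L v ∈ J) → g₁ ∈ J ∧ g₂ ∈ J) :
    ∃ v : V, ∀ u, L v * u ∈ Ideal.span {x} → u ∈ Ideal.span {x} := by
  classical
  by_contra hcon
  push_neg at hcon
  obtain ⟨t, htinf, htpr, -, hirr⟩ : ∃ t : Finset (Ideal R),
      Submodule.IsMinimalPrimaryDecomposition (Ideal.span {x}) t :=
    Submodule.IsLasker.exists_isMinimalPrimaryDecomposition (Submodule.isLasker R R) (Ideal.span {x})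
  set W : Ideal R → Submodule k V :=
    fun J => Submodule.comap L (Submodule.restrictScalars k J.radical) with hW
  -- covering
  have hcov : ⋃ p ∈ t.image W, (p : Set V) = Set.univ := by
    rw [Set.eq_univ_iff_forall]
    intro v
    obtain ⟨u, hu1, hu2⟩ := hcon v
    have huJ : ∃ J ∈ t, u ∉ J := by
      by_contra hall
      push_neg at hall
      exact hu2 (htinf ▸ (Submodule.mem_finsetInf.mpr (fun i hi => hall i hi)))
    obtain ⟨J, hJt, hJu⟩ := huJ
    have hLv : L v ∈ J.radical := by
      have hmem : u * L v ∈ J := by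
        have : Ideal.span {x} ≤ J := htinf ▸ Finset.inf_le hJt
        exact this (mul_comm (L v) u ▸ hu1)
      rcases (Ideal.isPrimary_iff.mp (htpr hJt)).2 hmem with h | h
      · exact absurd h hJu
      · exact h
    refine Set.mem_biUnion (Finset.mem_image_of_mem W hJt) ?_
    exact hLv
  -- some subspace is everything
  obtain ⟨J, hJt, hJtop⟩ := Finset.mem_image.mp (Subspace.top_mem_of_biUnion_eq_univ hcov)
  have hall : ∀ v : V, L v ∈ J.radical := by
    intro v
    have : v ∈ W J := hJtop ▸ Submodule.mem_top
    exact this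
  have hrad : (J.radical).IsPrime := Ideal.isPrime_radical (htpr hJt)
  obtain ⟨hg1r, hg2r⟩ := hgspan J.radical hrad hall
  obtain ⟨m₁, hm₁⟩ := Ideal.mem_radical_iff.mp hg1r
  obtain ⟨m₂, hm₂⟩ := Ideal.mem_radical_iff.mp hg2r
  -- pick z in the other components but not in J
  obtain ⟨z, hz1, hz2⟩ := SetLike.not_le_iff_exists.mp (hirr hJt)
  have hzx : z ∉ Ideal.span {x} := fun h => hz2 ((htinf ▸ Finset.inf_le hJt) h)
  have hmemx : ∀ w : R, w ∈ J → (∀ K ∈ t.erase J, w ∈ K) → w ∈ Ideal.span {x} := by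
    intro w hwJ hwK
    rw [← htinf]
    refine Submodule.mem_finsetInf.mpr (fun K hK => ?_)
    by_cases hKJ : K = J
    · exact hKJ ▸ hwJ
    · exact hwK K (Finset.mem_erase.mpr ⟨hKJ, hK⟩)
  have hz1' : ∀ K ∈ t.erase J, z ∈ K := fun K hK => Submodule.mem_finsetInf.mp hz1 K hK
  have h1 : g₁ ^ m₁ * z ∈ Ideal.span {x} :=
    hmemx _ (Ideal.mul_mem_right _ _ hm₁) (fun K hK => Ideal.mul_mem_left _ _ (hz1' K hK))
  have h2 : g₂ ^ m₂ * z ∈ Ideal.span {x} :=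
    hmemx _ (Ideal.mul_mem_right _ _ hm₂) (fun K hK => Ideal.mul_mem_left _ _ (hz1' K hK))
  -- reduce powers
  obtain ⟨j₁, hw1, hw2⟩ := exists_pow_red' (Ideal.span {x}) g₁ m₁ z hzx h1
  set w := g₁ ^ j₁ * z with hwdef
  have h2' : g₂ ^ m₂ * w ∈ Ideal.span {x} := by
    rw [hwdef, show g₂ ^ m₂ * (g₁ ^ j₁ * z) = g₁ ^ j₁ * (g₂ ^ m₂ * z) by ring]
    exact Ideal.mul_mem_left _ _ h2
  obtain ⟨j₂, hv1, hv2⟩ := exists_pow_red' (Ideal.span {x}) g₂ m₂ w hw1 h2'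
  set w₂ := g₂ ^ j₂ * w with hw₂def
  have hg1w₂ : g₁ * w₂ ∈ Ideal.span {x} := by
    rw [hw₂def, show g₁ * (g₂ ^ j₂ * w) = g₂ ^ j₂ * (g₁ * w) by ring]
    exact Ideal.mul_mem_left _ _ hw2
  exact no_common_ann' x g₁ g₂ w₂ hx hg₁ hmod hv1 hg1w₂ hv2

end avoid
/-- over an infinite field `k`, the locus
`G_2 = {(a,b) : (f̄_a, f̄_b) is an R-regular sequence}` is nonempty iff `depth R ≥ 2`,
i.e. iff some pair of homogeneous elements of positive degree of the irrelevant maximal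
ideal `R_+` forms an `R`-regular sequence. -/
theorem statement6 {k : Type*} [Field k] [Infinite k] (n d N : ℕ) (hn : 1 ≤ n)
    (hd : 1 ≤ d) (hN : N = (n + d).choose d)
    (M : Fin N → MvPolynomial (Fin (n + 1)) k)
    (hMmon : ∀ i : Fin N, ∃ σ : Fin (n + 1) →₀ ℕ,
      (σ.sum fun _ e => e) = d ∧ M i = MvPolynomial.monomial σ 1)
    (hMall : ∀ σ : Fin (n + 1) →₀ ℕ, (σ.sum fun _ e => e) = d →
      ∃! i : Fin N, M i = MvPolynomial.monomial σ 1)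
    (𝔭 : Ideal (MvPolynomial (Fin (n + 1)) k)) (h𝔭 : 𝔭.IsPrime) (h𝔭ne : 𝔭 ≠ ⊤)
    (h𝔭hom : ∀ f ∈ 𝔭, ∀ i : ℕ, MvPolynomial.homogeneousComponent i f ∈ 𝔭) :
    {ab : Fin 2 × Fin N → k |
      RingTheory.Sequence.IsRegular (MvPolynomial (Fin (n + 1)) k ⧸ 𝔭)
        [Ideal.Quotient.mk 𝔭 (∑ j : Fin N, ab (0, j) • M j),
         Ideal.Quotient.mk 𝔭 (∑ j : Fin N, ab (1, j) • M j)]}.Nonempty ↔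
    ∃ g₁ g₂ : MvPolynomial (Fin (n + 1)) k,
      (∃ e : ℕ, 0 < e ∧ g₁.IsHomogeneous e) ∧ (∃ e : ℕ, 0 < e ∧ g₂.IsHomogeneous e) ∧
      Ideal.Quotient.mk 𝔭 g₁ ∈ Ideal.span (Set.range fun i : Fin (n + 1) =>
        Ideal.Quotient.mk 𝔭 (MvPolynomial.X i)) ∧
      Ideal.Quotient.mk 𝔭 g₂ ∈ Ideal.span (Set.range fun i : Fin (n + 1) =>
        Ideal.Quotient.mk 𝔭 (MvPolynomial.X i)) ∧
      RingTheory.Sequence.IsRegular (MvPolynomial (Fin (n + 1)) k ⧸ 𝔭)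
        [Ideal.Quotient.mk 𝔭 g₁, Ideal.Quotient.mk 𝔭 g₂] := by
  classical
  haveI := h𝔭
  -- basic facts about the monomials
  have hdeg0 : ∀ j : Fin N, MvPolynomial.constantCoeff (M j) = 0 := by
    intro j
    obtain ⟨σ, hσ, hMj⟩ := hMmon j
    rw [hMj, MvPolynomial.constantCoeff_monomial, if_neg]
    intro hσ0
    rw [hσ0, Finsupp.sum_zero_index] at hσ
    omega
  have hfhom : ∀ c : Fin N → k, (∑ j, c j • M j).IsHomogeneous d := by
    intro c
    rw [← MvPolynomial.mem_homogeneousSubmodule]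
    refine Submodule.sum_mem _ (fun j _ => Submodule.smul_mem _ _ ?_)
    rw [MvPolynomial.mem_homogeneousSubmodule]
    obtain ⟨σ, hσ, hMj⟩ := hMmon j
    rw [hMj]
    exact MvPolynomial.isHomogeneous_monomial 1 hσ
  have hsum0 : ∀ c : Fin N → k, MvPolynomial.constantCoeff (∑ j, c j • M j) = 0 := by
    intro c
    rw [map_sum]
    simp [MvPolynomial.constantCoeff_smul, hdeg0]
  have hspanX : ∀ (f : MvPolynomial (Fin (n + 1)) k) (e : ℕ), 0 < e → f.IsHomogeneous e →
      Ideal.Quotient.mk 𝔭 f ∈ Ideal.span (Set.range fun i : Fin (n + 1) =>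
        Ideal.Quotient.mk 𝔭 (MvPolynomial.X i)) := by
    intro f e he hf
    have hf' : f ∈ Ideal.span (Set.range (MvPolynomial.X : Fin (n + 1) → MvPolynomial (Fin (n + 1)) k)) := by
      rw [← Set.image_univ, MvPolynomial.mem_ideal_span_X_image]
      intro m hm
      by_contra hcon
      push_neg at hcon
      have hm0 : m = 0 := Finsupp.ext fun l => hcon l (Set.mem_univ l)
      have hco := hf (MvPolynomial.mem_support_iff.mp hm)
      rw [hm0, map_zero] at hco
      omega
    have hmap := Ideal.mem_map_of_mem (Ideal.Quotient.mk 𝔭) hf'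
    rwa [Ideal.map_span, ← Set.range_comp] at hmap
  constructor
  · -- forward direction
    rintro ⟨ab, hab⟩
    exact ⟨∑ j, ab (0, j) • M j, ∑ j, ab (1, j) • M j,
      ⟨d, hd, hfhom _⟩, ⟨d, hd, hfhom _⟩,
      hspanX _ d hd (hfhom _), hspanX _ d hd (hfhom _), hab⟩
  · -- backward direction
    rintro ⟨g₁, g₂, ⟨e₁, he₁, hg₁hom⟩, ⟨e₂, he₂, hg₂hom⟩, hg₁mem, hg₂mem, hreg⟩
    rw [isRegular_pair_iff'] at hreg
    obtain ⟨hreg1, hmod, -⟩ := hreg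
    have hg1 : Ideal.Quotient.mk 𝔭 g₁ ≠ 0 := (isSMulRegular_iff_ne_zero' _).mp hreg1
    -- the linear map b ↦ f̄_b
    let L : (Fin N → k) →ₗ[k] (MvPolynomial (Fin (n + 1)) k ⧸ 𝔭) :=
      (Ideal.Quotient.mkₐ k 𝔭).toLinearMap.comp (Fintype.linearCombination k M)
    have hLb : ∀ b : Fin N → k, L b = Ideal.Quotient.mk 𝔭 (∑ j, b j • M j) := by
      intro b
      simp only [L, LinearMap.comp_apply, Fintype.linearCombination_apply,
        AlgHom.toLinearMap_apply, Ideal.Quotient.mkₐ_eq_mk]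
    have hLsingle : ∀ j : Fin N, L (Pi.single j 1) = Ideal.Quotient.mk 𝔭 (M j) := by
      intro j
      rw [hLb]
      congr 1
      rw [Finset.sum_eq_single j]
      · rw [Pi.single_eq_same, one_smul]
      · intro l _ hl
        rw [Pi.single_eq_of_ne hl, zero_smul]
      · intro h
        exact absurd (Finset.mem_univ j) h
    -- primes containing all the f̄_b contain ḡ₁, ḡ₂
    have hgJ : ∀ J : Ideal (MvPolynomial (Fin (n + 1)) k ⧸ 𝔭), J.IsPrime → (∀ v, L v ∈ J) →
        Ideal.Quotient.mk 𝔭 g₁ ∈ J ∧ Ideal.Quotient.mk 𝔭 g₂ ∈ J := by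
      intro J hJ hall
      have hX : ∀ l : Fin (n + 1), Ideal.Quotient.mk 𝔭 (MvPolynomial.X l) ∈ J := by
        intro l
        obtain ⟨i', hi', -⟩ := hMall (Finsupp.single l d) (by
          rw [Finsupp.sum_single_index]; rfl)
        have h1 : Ideal.Quotient.mk 𝔭 (M i') ∈ J := hLsingle i' ▸ hall (Pi.single i' 1)
        have h2 : (Ideal.Quotient.mk 𝔭 (MvPolynomial.X l)) ^ d ∈ J := by
          rw [← map_pow, MvPolynomial.X_pow_eq_monomial, ← hi']
          exact h1
        exact hJ.mem_of_pow_mem d h2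
      have hle : Ideal.span (Set.range fun i : Fin (n + 1) =>
          Ideal.Quotient.mk 𝔭 (MvPolynomial.X i)) ≤ J := by
        rw [Ideal.span_le]
        rintro _ ⟨l, rfl⟩
        exact hX l
      exact ⟨hle hg₁mem, hle hg₂mem⟩
    -- find a monomial not in 𝔭
    have hMi : ∃ i : Fin N, M i ∉ 𝔭 := by
      by_contra hcon
      push_neg at hcon
      have hL0 : ∀ b : Fin N → k, L b ∈ (⊥ : Ideal (MvPolynomial (Fin (n + 1)) k ⧸ 𝔭)) := by
        intro b
        rw [hLb, Ideal.mem_bot, Ideal.Quotient.eq_zero_iff_mem]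
        refine Ideal.sum_mem _ (fun j _ => ?_)
        rw [MvPolynomial.smul_eq_C_mul]
        exact Ideal.mul_mem_left _ _ (hcon j)
      have := (hgJ ⊥ Ideal.bot_prime hL0).1
      rw [Ideal.mem_bot] at this
      exact hg1 this
    obtain ⟨i, hMi⟩ := hMi
    have hx : Ideal.Quotient.mk 𝔭 (M i) ≠ 0 := by
      rw [Ne, Ideal.Quotient.eq_zero_iff_mem]
      exact hMi
    -- find the second element
    obtain ⟨b, hb⟩ := exists_regular_elem' L (Ideal.Quotient.mk 𝔭 (M i))
      (Ideal.Quotient.mk 𝔭 g₁) (Ideal.Quotient.mk 𝔭 g₂) hx hg1 hmod hgJ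
    -- properness
    have hproper : Ideal.span {Ideal.Quotient.mk 𝔭 (M i)} ⊔
        Ideal.span {Ideal.Quotient.mk 𝔭 (∑ j, b j • M j)} ≠ ⊤ := by
      intro htop
      have h1 : (1 : MvPolynomial (Fin (n + 1)) k ⧸ 𝔭) ∈ Ideal.span {Ideal.Quotient.mk 𝔭 (M i)} ⊔
          Ideal.span {Ideal.Quotient.mk 𝔭 (∑ j, b j • M j)} := htop ▸ Submodule.mem_top
      rw [Submodule.mem_sup] at h1
      obtain ⟨p, hp, q, hq, hpq⟩ := h1
      obtain ⟨c, hc⟩ := Ideal.mem_span_singleton'.mp hp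
      obtain ⟨c', hc'⟩ := Ideal.mem_span_singleton'.mp hq
      obtain ⟨C1, rfl⟩ := Ideal.Quotient.mk_surjective c
      obtain ⟨C2, rfl⟩ := Ideal.Quotient.mk_surjective c'
      have hz : Ideal.Quotient.mk 𝔭 (1 - (C1 * M i + C2 * (∑ j, b j • M j))) = 0 := by
        rw [map_sub, map_add, map_mul, map_mul, map_one, hc, hc', hpq, sub_self]
      rw [Ideal.Quotient.eq_zero_iff_mem] at hz
      have h0 := h𝔭hom _ hz 0
      rw [MvPolynomial.homogeneousComponent_zero] at h0
      have hcoeff : MvPolynomial.coeff 0 (1 - (C1 * M i + C2 * (∑ j, b j • M j))) = 1 := by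
        have hc0 : MvPolynomial.coeff 0 (1 - (C1 * M i + C2 * (∑ j, b j • M j)))
            = MvPolynomial.constantCoeff (1 - (C1 * M i + C2 * (∑ j, b j • M j))) := rfl
        rw [hc0, map_sub, map_add, map_mul, map_mul, map_one, hdeg0, hsum0,
          mul_zero, mul_zero, add_zero, sub_zero]
      rw [hcoeff, MvPolynomial.C_1] at h0
      exact (Ideal.ne_top_iff_one 𝔭).mp h𝔭ne h0
    -- assemble the witness
    refine ⟨fun p => ![Pi.single i (1 : k), b] p.1 p.2, ?_⟩
    simp only [Set.mem_setOf_eq]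
    have e0 : (∑ j, (![Pi.single i (1 : k), b] (0 : Fin 2) j) • M j) = M i := by
      simp only [Matrix.cons_val_zero]
      rw [Finset.sum_eq_single i]
      · rw [Pi.single_eq_same, one_smul]
      · intro l _ hl
        rw [Pi.single_eq_of_ne hl, zero_smul]
      · intro h
        exact absurd (Finset.mem_univ i) h
    have e1 : (∑ j, (![Pi.single i (1 : k), b] (1 : Fin 2) j) • M j) = ∑ j, b j • M j := by
      simp [Matrix.cons_val_one, Matrix.head_cons]
    rw [e0, e1, isRegular_pair_iff']
    refine ⟨(isSMulRegular_iff_ne_zero' _).mpr hx, ?_, hproper⟩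
    have := hb
    rw [hLb] at this
    exact this
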